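/- For k ≥ 1 the dual of the quaternary simplex code of type α satisfies r_L((S_k^α)⊥) = 1 and r_E((S_k^α)⊥) ≤ 4; for k ≥ 2 the dual of the quaternary simplex code of type β satisfies r_L((S_k^β)⊥) = 2 and r_E((S_k^β)⊥) ≤ 4. -/

import Mathlib

/-- The Lee weight on `ZMod 4`: `w_L(0)=0, w_L(1)=1, w_L(2)=2, w_L(3)=1`. -/
def leeWt (x : ZMod 4) : ℕ := min x.val (4 - x.val)

/-- The Euclidean weight on `ZMod 4`: `w_E(0)=0, w_E(1)=1, w_E(2)=4, w_E(3)=1`. -/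
def euclWt (x : ZMod 4) : ℕ := (min x.val (4 - x.val)) ^ 2

/-- The Lee distance between two vectors over `ZMod 4`. -/
def dLee {ι : Type*} [Fintype ι] (x y : ι → ZMod 4) : ℕ := ∑ i, leeWt (x i - y i)

/-- The Euclidean distance between two vectors over `ZMod 4`. -/
def dEucl {ι : Type*} [Fintype ι] (x y : ι → ZMod 4) : ℕ := ∑ i, euclWt (x i - y i)

/-- The covering radius of a code over `ZMod 4` with respect to the Lee distance. -/
noncomputable def covRadLee {ι : Type*} [Fintype ι] (C : Set (ι → ZMod 4)) : ℕ :=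
  sSup (Set.range fun u : ι → ZMod 4 => sInf (dLee u '' C))

/-- The covering radius of a code over `ZMod 4` with respect to the Euclidean distance. -/
noncomputable def covRadEucl {ι : Type*} [Fintype ι] (C : Set (ι → ZMod 4)) : ℕ :=
  sSup (Set.range fun u : ι → ZMod 4 => sInf (dEucl u '' C))

/-- The quaternary simplex code of type α: the `ZMod 4`-span of the rows of the
`k × 4^k` matrix whose columns are exactly all elements of `(ZMod 4)^k`, each once.
Here codewords are indexed by the columns, i.e. by the elements of `(ZMod 4)^k`. -/
def simplexAlpha (k : ℕ) : Set ((Fin k → ZMod 4) → ZMod 4) :=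
  Set.range fun a : Fin k → ZMod 4 => fun v : Fin k → ZMod 4 => ∑ i, a i * v i

/-- The length `2^(k-1) * (2^k - 1)` of the type β simplex code. -/
def lenB (k : ℕ) : ℕ := 2 ^ (k - 1) * (2 ^ k - 1)

/-- Entry `(i, j)` of the generator matrix `G_k^α` of the type α simplex code:
column `j` (for `j < 4^k`) is the base-4 digit expansion of `j`, so the columns are
exactly all elements of `(ZMod 4)^k`, each occurring once. -/
def galphaEnt (i j : ℕ) : ZMod 4 := ((j / 4 ^ i) % 4 : ℕ)

/-- Entry `(i, j)` of the recursively defined generator matrix `G_k^β`: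
`G_2^β` has rows `(1,1,1,1,0,2)` and `(0,1,2,3,1,1)`; for `k > 2`, the first row of
`G_k^β` consists of `4^(k-1)` ones, then `lenB (k-1)` zeros, then `lenB (k-1)` twos,
and the remaining rows are `[G_(k-1)^α | G_(k-1)^β | G_(k-1)^β]`. -/
def gbetaEnt : ℕ → ℕ → ℕ → ZMod 4
  | 0, _, _ => 0
  | 1, _, _ => 0
  | 2, i, j =>
      if i = 0 then (if j < 4 then 1 else if j = 4 then 0 else 2)
      else (if j = 0 then 0 else if j = 1 then 1 else if j = 2 then 2
            else if j = 3 then 3 else 1)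
  | (k + 3), i, j =>
      if i = 0 then
        (if j < 4 ^ (k + 2) then 1
         else if j < 4 ^ (k + 2) + 2 ^ (k + 1) * (2 ^ (k + 2) - 1) then 0 else 2)
      else if j < 4 ^ (k + 2) then galphaEnt (i - 1) j
      else if j < 4 ^ (k + 2) + 2 ^ (k + 1) * (2 ^ (k + 2) - 1) then
        gbetaEnt (k + 2) (i - 1) (j - 4 ^ (k + 2))
      else gbetaEnt (k + 2) (i - 1) (j - 4 ^ (k + 2) - 2 ^ (k + 1) * (2 ^ (k + 2) - 1))

/-- The quaternary simplex code of type β: the `ZMod 4`-span of the rows of `G_k^β`. -/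
def simplexBeta (k : ℕ) : Set (Fin (lenB k) → ZMod 4) :=
  Set.range fun a : Fin k → ZMod 4 => fun j : Fin (lenB k) => ∑ i : Fin k, a i * gbetaEnt k i j

/-- The dual code of a code over `ZMod 4`, with respect to the standard inner product. -/
def dualCode {ι : Type*} [Fintype ι] (C : Set (ι → ZMod 4)) : Set (ι → ZMod 4) :=
  {x | ∀ c ∈ C, ∑ i, x i * c i = 0}


lemma sSup_sInf_le {ι : Type*} [Fintype ι] (d : (ι → ZMod 4) → (ι → ZMod 4) → ℕ)
    (C : Set (ι → ZMod 4)) (B : ℕ) (h : ∀ u, ∃ c ∈ C, d u c ≤ B) :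
    sSup (Set.range fun u => sInf (d u '' C)) ≤ B := by
  apply csSup_le (Set.range_nonempty _)
  rintro n ⟨u, rfl⟩
  obtain ⟨c, hc, hd⟩ := h u
  exact le_trans (Nat.sInf_le ⟨c, hc, rfl⟩) hd

lemma sSup_sInf_eq {ι : Type*} [Fintype ι] (d : (ι → ZMod 4) → (ι → ZMod 4) → ℕ)
    (C : Set (ι → ZMod 4)) (B : ℕ) (hC : C.Nonempty)
    (hub : ∀ u, ∃ c ∈ C, d u c ≤ B) (hlb : ∃ u, ∀ c ∈ C, B ≤ d u c) :
    sSup (Set.range fun u => sInf (d u '' C)) = B := by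
  refine le_antisymm (sSup_sInf_le d C B hub) ?_
  obtain ⟨u, hu⟩ := hlb
  refine le_trans (le_csInf (hC.image _) ?_) (le_csSup ⟨B, ?_⟩ ⟨u, rfl⟩)
  · rintro n ⟨c, hc, rfl⟩; exact hu c hc
  · rintro n ⟨w, rfl⟩
    obtain ⟨c, hc, hd⟩ := hub w
    exact le_trans (Nat.sInf_le ⟨c, hc, rfl⟩) hd

-- dual characterization
lemma mem_dual_range {ι κ : Type*} [Fintype ι] [Fintype κ] [DecidableEq κ]
    (G : κ → ι → ZMod 4) (x : ι → ZMod 4) :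
    x ∈ dualCode (Set.range fun a : κ → ZMod 4 => fun j : ι => ∑ i, a i * G i j) ↔
      ∀ i, ∑ j, x j * G i j = 0 := by
  constructor
  · intro h i
    have := h (fun j => ∑ i', (Pi.single i 1 : κ → ZMod 4) i' * G i' j) ⟨Pi.single i 1, rfl⟩
    simpa [Pi.single_apply, ite_mul, Finset.sum_ite_eq'] using this
  · rintro h c ⟨a, rfl⟩
    calc ∑ j, x j * ∑ i, a i * G i j = ∑ j, ∑ i, a i * (x j * G i j) := by
          refine Finset.sum_congr rfl fun j _ => ?_
          rw [Finset.mul_sum]; exact Finset.sum_congr rfl fun i _ => by ring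
      _ = ∑ i, ∑ j, a i * (x j * G i j) := Finset.sum_comm
      _ = ∑ i, a i * ∑ j, x j * G i j := by
          exact Finset.sum_congr rfl fun i _ => (Finset.mul_sum _ _ _).symm
      _ = 0 := by simp [h]

lemma zero_mem_dual {ι : Type*} [Fintype ι] (C : Set (ι → ZMod 4)) :
    (0 : ι → ZMod 4) ∈ dualCode C := by
  intro c _; simp

-- sum helpers
lemma wt_sum_single {ι : Type*} [Fintype ι] [DecidableEq ι] (wt : ZMod 4 → ℕ) (h0 : wt 0 = 0)
    (j0 : ι) (a : ZMod 4) : ∑ j, wt (if j = j0 then a else 0) = wt a := by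
  rw [Finset.sum_eq_single j0]
  · simp
  · intro b _ hb; simp [hb, h0]
  · intro h; exact absurd (Finset.mem_univ j0) h

lemma wt_sum_pair {ι : Type*} [Fintype ι] [DecidableEq ι] (wt : ZMod 4 → ℕ) (h0 : wt 0 = 0)
    (j1 j2 : ι) (hne : j1 ≠ j2) (a b : ZMod 4) :
    ∑ j, wt ((if j = j1 then a else 0) + (if j = j2 then b else 0)) = wt a + wt b := by
  have key : ∀ j : ι, wt ((if j = j1 then a else 0) + (if j = j2 then b else 0))
      = (if j = j1 then wt a else 0) + (if j = j2 then wt b else 0) := by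
    intro j
    by_cases h1 : j = j1 <;> by_cases h2 : j = j2 <;> simp_all
  rw [Finset.sum_congr rfl fun j _ => key j, Finset.sum_add_distrib]
  simp [Finset.sum_ite_eq']

lemma syn_single {ι : Type*} [Fintype ι] [DecidableEq ι] (g : ι → ZMod 4) (j0 : ι) (a : ZMod 4) :
    ∑ j, (if j = j0 then a else 0) * g j = a * g j0 := by
  simp [ite_mul, Finset.sum_ite_eq']

lemma syn_pair {ι : Type*} [Fintype ι] [DecidableEq ι] (g : ι → ZMod 4) (j1 j2 : ι) (a b : ZMod 4) :
    ∑ j, ((if j = j1 then a else 0) + (if j = j2 then b else 0)) * g j = a * g j1 + b * g j2 := by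
  simp only [add_mul, Finset.sum_add_distrib, syn_single]

lemma syn_sub {ι : Type*} [Fintype ι] (g : ι → ZMod 4) (u e : ι → ZMod 4) :
    ∑ j, (u - e) j * g j = (∑ j, u j * g j) - ∑ j, e j * g j := by
  rw [← Finset.sum_sub_distrib]
  exact Finset.sum_congr rfl fun j _ => by simp [sub_mul]

lemma dLee_sub {ι : Type*} [Fintype ι] (u e : ι → ZMod 4) :
    dLee u (u - e) = ∑ j, leeWt (e j) := by
  simp [dLee]

-- arithmetic
lemma lenB_eq (m : ℕ) : lenB (m + 3) = 4 ^ (m + 2) + 2 * lenB (m + 2) := by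
  have h4 : (1:ℕ) ≤ 2 ^ (m + 1) := Nat.one_le_two_pow
  show 2 ^ (m + 3 - 1) * (2 ^ (m + 3) - 1)
      = 4 ^ (m + 2) + 2 * (2 ^ (m + 2 - 1) * (2 ^ (m + 2) - 1))
  rw [show m + 3 - 1 = m + 2 from rfl, show m + 2 - 1 = m + 1 from rfl]
  rw [show (4:ℕ) = 2 * 2 from rfl, mul_pow]
  rw [show (2:ℕ) ^ (m + 3) = 2 ^ (m + 1) * 2 * 2 by ring,
      show (2:ℕ) ^ (m + 2) = 2 ^ (m + 1) * 2 by ring]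
  revert h4
  generalize (2:ℕ) ^ (m + 1) = a
  intro h4
  zify [show (1:ℕ) ≤ a * 2 * 2 by omega, show (1:ℕ) ≤ a * 2 by omega]
  ring

lemma lenB_pos (k : ℕ) (hk : 1 ≤ k) : 4 ^ (k - 1) ≤ lenB k := by
  obtain ⟨n, rfl⟩ : ∃ n, k = n + 1 := ⟨k - 1, by omega⟩
  show 4 ^ n ≤ 2 ^ (n + 1 - 1) * (2 ^ (n + 1) - 1)
  rw [show n + 1 - 1 = n from rfl]
  have h4 : (1:ℕ) ≤ 2 ^ n := Nat.one_le_two_pow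
  rw [show (4:ℕ) = 2 * 2 from rfl, mul_pow, pow_succ]
  exact Nat.mul_le_mul_left _ (by omega)

lemma lenB_sub (n : ℕ) : 2 ^ (n + 1) * (2 ^ (n + 2) - 1) = lenB (n + 2) := rfl

-- column structure: the first 4^(k-1) columns
lemma gbeta_first (k : ℕ) (hk : 2 ≤ k) (j : ℕ) (hj : j < 4 ^ (k - 1)) :
    gbetaEnt k 0 j = 1 := by
  obtain ⟨m, rfl⟩ : ∃ m, k = m + 2 := ⟨k - 2, by omega⟩
  cases m with
  | zero => simp only [gbetaEnt]; norm_num at hj ⊢; omega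
  | succ n =>
    show gbetaEnt (n + 3) 0 j = 1
    have hj' : j < 4 ^ (n + 2) := hj
    simp only [gbetaEnt, if_pos rfl]
    simp [hj']

lemma gbeta_col (k : ℕ) (hk : 2 ≤ k) (i j : ℕ) (hi : 0 < i) (hik : i < k)
    (hj : j < 4 ^ (k - 1)) : gbetaEnt k i j = ((j / 4 ^ (i - 1)) % 4 : ℕ) := by
  obtain ⟨m, rfl⟩ : ∃ m, k = m + 2 := ⟨k - 2, by omega⟩
  cases m with
  | zero =>
    have hi1 : i = 1 := by omega
    subst hi1
    norm_num at hj
    interval_cases j <;> decide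
  | succ n =>
    show gbetaEnt (n + 3) i j = _
    have hj' : j < 4 ^ (n + 2) := hj
    simp only [gbetaEnt, galphaEnt]
    rw [if_neg (by omega), if_pos hj']

-- every column nonzero
lemma gbeta_nonzero : ∀ (m : ℕ), ∀ j < lenB (m + 2), ∃ i < m + 2, gbetaEnt (m + 2) i j ≠ 0 := by
  intro m
  induction m with
  | zero =>
    intro j hj
    have : lenB 2 = 6 := by decide
    rw [this] at hj
    interval_cases j <;> decide
  | succ n ih =>
    intro j hj
    rw [show n + 1 + 2 = n + 3 from rfl, lenB_eq n] at hj
    by_cases h1 : j < 4 ^ (n + 2)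
    · exact ⟨0, by omega, by rw [gbeta_first (n + 3) (by omega) j h1]; decide⟩
    · by_cases h2 : j < 4 ^ (n + 2) + lenB (n + 2)
      · obtain ⟨i, hi, hne⟩ := ih (j - 4 ^ (n + 2)) (by omega)
        refine ⟨i + 1, by omega, ?_⟩
        show gbetaEnt (n + 3) (i + 1) j ≠ 0
        simp only [gbetaEnt, if_neg (Nat.succ_ne_zero i), if_neg h1]
        rw [if_pos (by rw [lenB_sub n]; omega)]
        simpa using hne
      · obtain ⟨i, hi, hne⟩ := ih (j - 4 ^ (n + 2) - lenB (n + 2)) (by omega)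
        refine ⟨i + 1, by omega, ?_⟩
        show gbetaEnt (n + 3) (i + 1) j ≠ 0
        simp only [gbetaEnt, if_neg (Nat.succ_ne_zero i), if_neg h1]
        rw [if_neg (by rw [lenB_sub n]; omega), lenB_sub n]
        simpa using hne

-- first row values
lemma gbeta_row0 (k : ℕ) (hk : 2 ≤ k) (j : ℕ) :
    gbetaEnt k 0 j = 0 ∨ gbetaEnt k 0 j = 1 ∨ gbetaEnt k 0 j = 2 := by
  obtain ⟨m, rfl⟩ : ∃ m, k = m + 2 := ⟨k - 2, by omega⟩
  cases m with
  | zero => simp only [gbetaEnt]; split_ifs <;> simp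
  | succ n =>
    show gbetaEnt (n + 3) 0 j = 0 ∨ gbetaEnt (n + 3) 0 j = 1 ∨ gbetaEnt (n + 3) 0 j = 2
    simp only [gbetaEnt, if_pos rfl]; split_ifs <;> simp

-- if first entry = 2 then some lower entry nonzero
lemma gbeta_two (k : ℕ) (hk : 2 ≤ k) (j : ℕ) (hj : j < lenB k) (h2 : gbetaEnt k 0 j = 2) :
    ∃ i, 0 < i ∧ i < k ∧ gbetaEnt k i j ≠ 0 := by
  obtain ⟨m, rfl⟩ : ∃ m, k = m + 2 := ⟨k - 2, by omega⟩
  cases m with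
  | zero =>
    have h6 : lenB 2 = 6 := by decide
    rw [h6] at hj
    interval_cases j <;> first
      | (exact absurd h2 (by decide))
      | (exact ⟨1, by omega, by omega, by decide⟩)
  | succ n =>
    have hj3 : j < lenB (n + 3) := hj
    have h2' : gbetaEnt (n + 3) 0 j = 2 := h2
    have hj' : ¬ (j < 4 ^ (n + 2) + lenB (n + 2)) := by
      by_contra hcon
      by_cases h1 : j < 4 ^ (n + 2)
      · rw [gbeta_first (n + 3) (by omega) j h1] at h2'
        exact absurd h2' (by decide)
      · have hlt : j < 4 ^ (n + 2) + 2 ^ (n + 1) * (2 ^ (n + 2) - 1) := by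
          rw [lenB_sub n]; omega
        revert h2'
        simp only [gbetaEnt, if_pos rfl, if_neg h1, if_pos hlt]
        intro hx
        rw [if_pos trivial] at hx
        exact absurd hx (by decide)
    rw [lenB_eq n] at hj3
    obtain ⟨i, hi, hne⟩ := gbeta_nonzero n (j - 4 ^ (n + 2) - lenB (n + 2)) (by omega)
    refine ⟨i + 1, by omega, by omega, ?_⟩
    show gbetaEnt (n + 3) (i + 1) j ≠ 0
    have h1 : ¬ (j < 4 ^ (n + 2)) := by omega
    simp only [gbetaEnt, if_neg (Nat.succ_ne_zero i), if_neg h1]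
    rw [if_neg (by rw [lenB_sub n]; omega), lenB_sub n]
    simpa using hne

-- column 0 of G_k^beta
lemma gbeta_col0_top (k : ℕ) (hk : 2 ≤ k) : gbetaEnt k 0 0 = 1 :=
  gbeta_first k hk 0 (Nat.pow_pos (by norm_num))

lemma gbeta_col0_rest (k : ℕ) (hk : 2 ≤ k) (i : ℕ) (hi : 0 < i) (hik : i < k) :
    gbetaEnt k i 0 = 0 := by
  rw [gbeta_col k hk i 0 hi hik (Nat.pow_pos (by norm_num))]
  simp

-- digit lemma
lemma exists_col (N : ℕ) (v : Fin N → ZMod 4) :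
    ∃ j, j < 4 ^ N ∧ ∀ (m : ℕ) (hm : m < N), (j / 4 ^ m) % 4 = (v ⟨m, hm⟩).val := by
  induction N with
  | zero => exact ⟨0, by norm_num, fun m hm => absurd hm (by omega)⟩
  | succ N ih =>
    obtain ⟨j', hj', hd⟩ := ih (fun i => v i.succ)
    have hv0 : (v 0).val < 4 := ZMod.val_lt _
    refine ⟨(v 0).val + 4 * j', ?_, ?_⟩
    · have : (4:ℕ) ^ (N + 1) = 4 * 4 ^ N := by ring
      omega
    · intro m hm
      cases m with
      | zero =>
        simp only [pow_zero, Nat.div_one]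
        rw [Nat.add_mul_mod_self_left]
        exact Nat.mod_eq_of_lt hv0
      | succ m =>
        have e1 : ((v 0).val + 4 * j') / 4 ^ (m + 1) = j' / 4 ^ m := by
          rw [pow_succ, mul_comm ((4:ℕ)^m) 4, ← Nat.div_div_eq_div_mul]
          congr 1
          rw [Nat.add_mul_div_left _ _ (by norm_num : (0:ℕ) < 4)]
          omega
        rw [e1, hd m (by omega)]
        congr 1

lemma mem_dual_alpha {k : ℕ} (x : (Fin k → ZMod 4) → ZMod 4) :
    x ∈ dualCode (simplexAlpha k) ↔ ∀ i, ∑ v, x v * v i = 0 := by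
  have := mem_dual_range (ι := Fin k → ZMod 4) (κ := Fin k) (fun i v => v i) x
  rw [show (Set.range fun a : Fin k → ZMod 4 => fun v : Fin k → ZMod 4 =>
      ∑ i, a i * (fun (i : Fin k) (v : Fin k → ZMod 4) => v i) i v) = simplexAlpha k from rfl] at this
  exact this

lemma alpha_cover {k : ℕ} (u : (Fin k → ZMod 4) → ZMod 4) :
    ∃ c ∈ dualCode (simplexAlpha k), dLee u c ≤ 1 ∧ dEucl u c ≤ 1 := by
  classical
  set s : Fin k → ZMod 4 := fun i => ∑ v, u v * v i with hs
  set e : (Fin k → ZMod 4) → ZMod 4 := fun v => if v = s then 1 else 0 with he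
  refine ⟨u - e, ?_, ?_, ?_⟩
  · rw [mem_dual_alpha]
    intro i
    rw [syn_sub (fun v => v i) u e, he]
    rw [syn_single (fun v => v i) s 1]
    simp [hs]
  · rw [show dLee u (u - e) = ∑ v, leeWt (e v) by simp [dLee]]
    rw [he, wt_sum_single leeWt (by decide) s 1]; decide
  · rw [show dEucl u (u - e) = ∑ v, euclWt (e v) by simp [dEucl]]
    rw [he, wt_sum_single euclWt (by decide) s 1]; decide

lemma alpha_far {k : ℕ} (hk : 1 ≤ k) :
    ∃ u, ∀ c ∈ dualCode (simplexAlpha k), 1 ≤ dLee u c := by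
  classical
  set w : Fin k → ZMod 4 := fun _ => 1 with hw
  refine ⟨fun v => if v = w then 1 else 0, ?_⟩
  intro c hc
  by_contra h
  push_neg at h
  interval_cases h' : dLee (fun v => if v = w then 1 else 0) c
  have heq : (fun v : Fin k → ZMod 4 => if v = w then 1 else 0) = c := by
    funext v
    have h0 : leeWt ((if v = w then (1:ZMod 4) else 0) - c v) = 0 := by
      have := (Finset.sum_eq_zero_iff.mp h') v (Finset.mem_univ v)
      exact this
    have : (if v = w then (1:ZMod 4) else 0) - c v = 0 := by
      revert h0; generalize (if v = w then (1:ZMod 4) else 0) - c v = z; revert z; decide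
    exact sub_eq_zero.mp this
  rw [← heq] at hc
  rw [mem_dual_alpha] at hc
  have := hc ⟨0, hk⟩
  rw [syn_single (fun v => v ⟨0, hk⟩) w 1] at this
  simp [hw] at this
  exact absurd this (by decide)

section Beta
variable (N : ℕ)

/-- the matrix as a function on Fin indices -/
def GB (N : ℕ) (i : Fin (N + 1)) (j : Fin (lenB (N + 1))) : ZMod 4 :=
  gbetaEnt (N + 1) i j

lemma mem_dual_beta (x : Fin (lenB (N + 1)) → ZMod 4) :
    x ∈ dualCode (simplexBeta (N + 1)) ↔ ∀ i, ∑ j, x j * GB N i j = 0 := by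
  have := mem_dual_range (ι := Fin (lenB (N + 1))) (κ := Fin (N + 1)) (GB N) x
  rw [show (Set.range fun a : Fin (N + 1) → ZMod 4 => fun j : Fin (lenB (N + 1)) =>
      ∑ i, a i * GB N i j) = simplexBeta (N + 1) from rfl] at this
  exact this

/-- a column of `G^β` with prescribed lower part. -/
lemma col_spec (_hN : 1 ≤ N) (v : Fin N → ZMod 4) :
    ∃ J : Fin (lenB (N + 1)),
      GB N 0 J = 1 ∧ (∀ i : Fin N, GB N i.succ J = v i) ∧
        ∀ (m : ℕ) (hm : m < N), ((J : ℕ) / 4 ^ m) % 4 = (v ⟨m, hm⟩).val := by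
  obtain ⟨j, hj, hd⟩ := exists_col N v
  have hk2 : 2 ≤ N + 1 := by omega
  have hjlen : j < lenB (N + 1) := lt_of_lt_of_le hj (lenB_pos (N + 1) (by omega))
  refine ⟨⟨j, hjlen⟩, ?_, ?_, ?_⟩
  · show gbetaEnt (N + 1) 0 j = 1
    exact gbeta_first (N + 1) hk2 j hj
  · intro i
    show gbetaEnt (N + 1) (i.val + 1) j = v i
    rw [gbeta_col (N + 1) hk2 (i.val + 1) j (by omega) (by omega) hj]
    simp only [Nat.add_sub_cancel]
    rw [hd i.val i.isLt]
    simp [ZMod.natCast_val, ZMod.cast_id]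
  · exact hd

lemma col_ne (hN : 1 ≤ N) {v w : Fin N → ZMod 4} {J1 J2 : Fin (lenB (N + 1))}
    (hd1 : ∀ (m : ℕ) (hm : m < N), ((J1 : ℕ) / 4 ^ m) % 4 = (v ⟨m, hm⟩).val)
    (hd2 : ∀ (m : ℕ) (hm : m < N), ((J2 : ℕ) / 4 ^ m) % 4 = (w ⟨m, hm⟩).val)
    (hvw : v ≠ w) : J1 ≠ J2 := by
  intro hJ
  apply hvw
  funext i
  have := hd1 i.val i.isLt
  rw [hJ] at this
  rw [hd2 i.val i.isLt] at this
  have : v ⟨i.val, i.isLt⟩ = w ⟨i.val, i.isLt⟩ := ZMod.val_injective _ this.symm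
  simpa using this

lemma beta_cover (hN : 1 ≤ N) (u : Fin (lenB (N + 1)) → ZMod 4) :
    ∃ c ∈ dualCode (simplexBeta (N + 1)), dLee u c ≤ 2 ∧ dEucl u c ≤ 4 := by
  classical
  have hk2 : 2 ≤ N + 1 := by omega
  set s : Fin (N + 1) → ZMod 4 := fun i => ∑ j, u j * GB N i j with hs
  have hcase : s 0 = 1 ∨ s 0 = 3 ∨ (s 0 = 0 ∨ s 0 = 2) := by
    have : ∀ x : ZMod 4, x = 1 ∨ x = 3 ∨ (x = 0 ∨ x = 2) := by decide
    exact this _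
  rcases hcase with hodd | hodd | heven
  -- odd cases: single coordinate change
  case _ | _ =>
    set δ := s 0 with hδ
    have hδδ : δ * δ = 1 := by rw [hodd]; decide
    have hlee : leeWt δ = 1 := by rw [hodd]; decide
    have heucl : euclWt δ = 1 := by rw [hodd]; decide
    obtain ⟨J, hJ0, hJs, _⟩ := col_spec N hN (fun i => δ * s i.succ)
    set e : Fin (lenB (N + 1)) → ZMod 4 := fun j => if j = J then δ else 0 with he
    refine ⟨u - e, ?_, ?_, ?_⟩
    · rw [mem_dual_beta N]
      intro i
      rw [syn_sub (GB N i) u e, he, syn_single (GB N i) J δ]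
      induction i using Fin.cases with
      | zero =>
        show δ - δ * GB N 0 J = 0
        rw [hJ0, mul_one, sub_self]
      | succ i' =>
        show s i'.succ - δ * GB N i'.succ J = 0
        rw [hJs i', ← mul_assoc, hδδ, one_mul, sub_self]
    · rw [show dLee u (u - e) = ∑ j, leeWt (e j) by simp [dLee], he,
        wt_sum_single leeWt (by decide) J δ, hlee]
      omega
    · rw [show dEucl u (u - e) = ∑ j, euclWt (e j) by simp [dEucl], he,
        wt_sum_single euclWt (by decide) J δ, heucl]
      omega
  -- even case
  · by_cases hz : s = 0
    · refine ⟨u, ?_, ?_, ?_⟩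
      · rw [mem_dual_beta N]
        intro i
        have h0 : s i = 0 := by rw [hz]; rfl
        exact h0
      · simp [dLee, leeWt]
      · simp [dEucl, euclWt]
    · set ε := s 0 with hε
      have key : ∃ v w : Fin N → ZMod 4, v ≠ w ∧ ∀ i : Fin N, v i + (ε - 1) * w i = s i.succ := by
        by_cases hsp : ∀ i : Fin N, s i.succ = 0
        · have hε2 : ε = 2 := by
            rcases heven with h0 | h2
            · exfalso; apply hz; funext i
              simp only [Pi.zero_apply]
              induction i using Fin.cases with
              | zero => exact h0
              | succ i' => exact hsp i'
            · exact h2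
          refine ⟨fun _ => 3, fun _ => 1, ?_, ?_⟩
          · intro hcon
            have := congrFun hcon ⟨0, hN⟩
            exact absurd this (by decide)
          · intro i
            rw [hsp i, hε2]
            show (3 : ZMod 4) + (2 - 1) * 1 = 0
            decide
        · push_neg at hsp
          obtain ⟨i0, hi0⟩ := hsp
          refine ⟨fun i => s i.succ, fun _ => 0, ?_, fun i => by rw [mul_zero, add_zero]⟩
          intro hcon
          exact hi0 (congrFun hcon i0)
      obtain ⟨v, w, hvw, hsum⟩ := key
      obtain ⟨J1, hJ10, hJ1s, hJ1d⟩ := col_spec N hN v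
      obtain ⟨J2, hJ20, hJ2s, hJ2d⟩ := col_spec N hN w
      have hJne : J1 ≠ J2 := col_ne N hN hJ1d hJ2d hvw
      have hδ2 : leeWt (ε - 1) = 1 ∧ euclWt (ε - 1) = 1 := by
        rcases heven with h0 | h2 <;> rw [← hε] at * <;>
          first | (rw [h0]; exact ⟨by decide, by decide⟩) | (rw [h2]; exact ⟨by decide, by decide⟩)
      set e : Fin (lenB (N + 1)) → ZMod 4 :=
        fun j => (if j = J1 then 1 else 0) + (if j = J2 then ε - 1 else 0) with he
      refine ⟨u - e, ?_, ?_, ?_⟩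
      · rw [mem_dual_beta N]
        intro i
        rw [syn_sub (GB N i) u e, he, syn_pair (GB N i) J1 J2 1 (ε - 1)]
        induction i using Fin.cases with
        | zero =>
          show ε - (1 * GB N 0 J1 + (ε - 1) * GB N 0 J2) = 0
          rw [hJ10, hJ20, mul_one, mul_one]
          ring
        | succ i' =>
          show s i'.succ - (1 * GB N i'.succ J1 + (ε - 1) * GB N i'.succ J2) = 0
          rw [hJ1s i', hJ2s i', one_mul, hsum i', sub_self]
      · rw [show dLee u (u - e) = ∑ j, leeWt (e j) by simp [dLee], he,
          wt_sum_pair leeWt (by decide) J1 J2 hJne 1 (ε - 1)]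
        rw [hδ2.1]; decide
      · rw [show dEucl u (u - e) = ∑ j, euclWt (e j) by simp [dEucl], he,
          wt_sum_pair euclWt (by decide) J1 J2 hJne 1 (ε - 1)]
        rw [hδ2.2]; decide

end Beta

lemma beta_far (hN : 1 ≤ N) :
    ∃ u, ∀ c ∈ dualCode (simplexBeta (N + 1)), 2 ≤ dLee u c := by
  classical
  have hk2 : 2 ≤ N + 1 := by omega
  have hpos : 0 < lenB (N + 1) :=
    lt_of_lt_of_le (Nat.pow_pos (by norm_num)) (lenB_pos (N + 1) (by omega))
  set J0 : Fin (lenB (N + 1)) := ⟨0, hpos⟩ with hJ0def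
  set u : Fin (lenB (N + 1)) → ZMod 4 := fun j => if j = J0 then 2 else 0 with hu
  refine ⟨u, ?_⟩
  intro c hc
  by_contra hcon
  push_neg at hcon
  -- e := u - c has lee weight ≤ 1 and syndrome (2,0,...,0)
  set e : Fin (lenB (N + 1)) → ZMod 4 := fun j => u j - c j with he
  have hw : ∑ j, leeWt (e j) ≤ 1 := by
    have : dLee u c = ∑ j, leeWt (e j) := rfl
    omega
  have hsyn : ∀ i : Fin (N + 1), ∑ j, e j * GB N i j = 2 * gbetaEnt (N + 1) i 0 := by
    intro i
    have h1 : ∑ j, e j * GB N i j = (∑ j, u j * GB N i j) - ∑ j, c j * GB N i j := by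
      rw [← Finset.sum_sub_distrib]
      exact Finset.sum_congr rfl fun j _ => by rw [he]; ring
    have h2 : ∑ j, c j * GB N i j = 0 := (mem_dual_beta N c).mp hc i
    have h3 : ∑ j, u j * GB N i j = 2 * GB N i J0 := by
      rw [hu]; exact syn_single (GB N i) J0 2
    rw [h1, h2, h3, sub_zero]
    rfl
  -- at most one nonzero coordinate of e
  have hle1 : ∀ x : ZMod 4, x ≠ 0 → 1 ≤ leeWt x := by decide
  have hone : ∀ j1 j2, j1 ≠ j2 → e j1 ≠ 0 → e j2 ≠ 0 → False := by
    intro j1 j2 hne h1 h2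
    have hsub : ({j1, j2} : Finset _) ⊆ Finset.univ := Finset.subset_univ _
    have : ∑ j ∈ ({j1, j2} : Finset _), leeWt (e j) ≤ ∑ j, leeWt (e j) :=
      Finset.sum_le_sum_of_subset hsub
    rw [Finset.sum_pair hne] at this
    have g1 := hle1 _ h1
    have g2 := hle1 _ h2
    omega
  have hex : ∃ j0, e j0 ≠ 0 := by
    by_contra hall
    push_neg at hall
    have := hsyn 0
    rw [show gbetaEnt (N + 1) (0 : Fin (N+1)) 0 = 1 from gbeta_col0_top (N + 1) hk2] at this
    rw [Finset.sum_eq_zero (fun j _ => by rw [hall j, zero_mul])] at this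
    exact absurd this.symm (by decide)
  obtain ⟨j0, hj0⟩ := hex
  have hrest : ∀ j, j ≠ j0 → e j = 0 := by
    intro j hj
    by_contra hne
    exact hone j j0 hj hne hj0
  have hsyn2 : ∀ i : Fin (N + 1), e j0 * GB N i j0 = 2 * gbetaEnt (N + 1) i 0 := by
    intro i
    rw [← hsyn i]
    rw [Finset.sum_eq_single j0 (fun b _ hb => by rw [hrest b hb, zero_mul])
      (fun h => absurd (Finset.mem_univ j0) h)]
  -- δ = e j0 is a unit
  set δ := e j0 with hδ
  have hδle : leeWt δ ≤ 1 := by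
    have : leeWt (e j0) ≤ ∑ j, leeWt (e j) :=
      Finset.single_le_sum (f := fun j => leeWt (e j)) (fun j _ => Nat.zero_le _)
        (Finset.mem_univ j0)
    rw [hδ]
    omega
  have keyδ : ∀ z : ZMod 4, z ≠ 0 → leeWt z ≤ 1 → z = 1 ∨ z = 3 := by decide
  have hδ13 : δ = 1 ∨ δ = 3 := keyδ δ hj0 hδle
  -- first row: δ * G 0 j0 = 2, so G 0 j0 = 2
  have hG2 : gbetaEnt (N + 1) 0 (j0 : ℕ) = 2 := by
    have h1 := hsyn2 0
    rw [show gbetaEnt (N + 1) (0 : Fin (N+1)) 0 = 1 from gbeta_col0_top (N + 1) hk2, mul_one] at h1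
    have h2 := gbeta_row0 (N + 1) hk2 j0
    have key : ∀ d g : ZMod 4, (d = 1 ∨ d = 3) → (g = 0 ∨ g = 1 ∨ g = 2) → d * g = 2 → g = 2 := by
      decide
    exact key δ _ hδ13 h2 h1
  obtain ⟨i, hi0, hik, hine⟩ := gbeta_two (N + 1) hk2 j0 j0.isLt hG2
  have h4 := hsyn2 ⟨i, hik⟩
  rw [show gbetaEnt (N + 1) ((⟨i, hik⟩ : Fin (N+1)) : ℕ) 0 = 0 from
    gbeta_col0_rest (N + 1) hk2 i hi0 hik, mul_zero] at h4
  have key2 : ∀ d g : ZMod 4, (d = 1 ∨ d = 3) → d * g = 0 → g = 0 := by decide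
  exact hine (key2 δ _ hδ13 h4)

/-- For `k ≥ 1`, the dual of the type α quaternary simplex code has Lee covering radius `1`
and Euclidean covering radius at most `4`; for `k ≥ 2`, the dual of the type β quaternary
simplex code has Lee covering radius `2` and Euclidean covering radius at most `4`. -/
theorem stmt17 :
    (∀ k : ℕ, 1 ≤ k →
      covRadLee (dualCode (simplexAlpha k)) = 1 ∧
        covRadEucl (dualCode (simplexAlpha k)) ≤ 4) ∧
    (∀ k : ℕ, 2 ≤ k →
      covRadLee (dualCode (simplexBeta k)) = 2 ∧
        covRadEucl (dualCode (simplexBeta k)) ≤ 4) := by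
  constructor
  · intro k hk
    constructor
    · show sSup (Set.range fun u => sInf (dLee u '' dualCode (simplexAlpha k))) = 1
      apply sSup_sInf_eq dLee _ 1 ⟨0, zero_mem_dual _⟩
      · intro u
        obtain ⟨c, hc, h1, _⟩ := alpha_cover u
        exact ⟨c, hc, h1⟩
      · exact alpha_far hk
    · show sSup (Set.range fun u => sInf (dEucl u '' dualCode (simplexAlpha k))) ≤ 4
      apply sSup_sInf_le dEucl _ 4
      intro u
      obtain ⟨c, hc, _, h2⟩ := alpha_cover u
      exact ⟨c, hc, le_trans h2 (by norm_num)⟩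
  · intro k hk
    obtain ⟨N, rfl⟩ : ∃ N, k = N + 1 := ⟨k - 1, by omega⟩
    have hN : 1 ≤ N := by omega
    constructor
    · show sSup (Set.range fun u => sInf (dLee u '' dualCode (simplexBeta (N + 1)))) = 2
      apply sSup_sInf_eq dLee _ 2 ⟨0, zero_mem_dual _⟩
      · intro u
        obtain ⟨c, hc, h1, _⟩ := beta_cover N hN u
        exact ⟨c, hc, h1⟩
      · exact beta_far hN
    · show sSup (Set.range fun u => sInf (dEucl u '' dualCode (simplexBeta (N + 1)))) ≤ 4
      apply sSup_sInf_le dEucl _ 4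
      intro u
      obtain ⟨c, hc, _, h2⟩ := beta_cover N hN u
      exact ⟨c, hc, h2⟩
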